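/- Let 1 ≤ k ≤ m−1, d = gcd(k,m), and λ, μ ∈ F_{q^m} with μ ≠ 0; set ρ = λ/μ and φ(x) = λx + μx^{q^k}. Then dim_{F_q} ker(φ) = d if (−ρ)^{(q^m−1)/(q^d−1)} = 1, and dim_{F_q} ker(φ) = 0 otherwise. -/

import Mathlib

lemma aux_gcd (q : ℕ) (hq : 1 ≤ q) : ∀ a b, Nat.gcd (q ^ a - 1) (q ^ b - 1) = q ^ Nat.gcd a b - 1 := by
  intro a
  induction a using Nat.strong_induction_on with
  | _ a ih =>
    intro b
    rcases Nat.eq_zero_or_pos a with rfl | ha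
    · simp
    · obtain ⟨t, ht⟩ : q ^ a - 1 ∣ (q ^ a) ^ (b / a) - 1 := by
        simpa using Nat.sub_dvd_pow_sub_pow (q ^ a) 1 (b / a)
      have hkey : q ^ b - 1 = (q ^ (b % a) - 1) + (q ^ (b % a) * t) * (q ^ a - 1) := by
        have hd : q ^ (b % a) * (q ^ a) ^ (b / a) = q ^ b := by
          rw [← pow_mul, ← pow_add, Nat.mod_add_div]
        have h1 : 1 ≤ q ^ (b % a) := Nat.one_le_pow _ _ hq
        have h2 : 1 ≤ (q ^ a) ^ (b / a) := Nat.one_le_pow _ _ (Nat.one_le_pow _ _ hq)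
        have h3 : q ^ (b % a) * ((q ^ a) ^ (b / a) - 1)
            = q ^ (b % a) * (q ^ a) ^ (b / a) - q ^ (b % a) := by
          rw [Nat.mul_sub, mul_one]
        have h4 : q ^ (b % a) ≤ q ^ (b % a) * (q ^ a) ^ (b / a) := Nat.le_mul_of_pos_right _ h2
        have h5 : q ^ (b % a) * ((q ^ a) ^ (b / a) - 1) = (q ^ (b % a) * t) * (q ^ a - 1) := by
          rw [ht]; ring
        omega
      rw [hkey, Nat.gcd_add_mul_right_right, Nat.gcd_comm, ih (b % a) (Nat.mod_lt b ha) a,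
        ← Nat.gcd_rec]

lemma aux_card_roots (L : Type*) [Field L] [Fintype L] {g : ℕ} (hg : 0 < g)
    (hgd : g ∣ Nat.card Lˣ) : Nat.card {y : Lˣ // y ^ g = 1} = g := by
  haveI : Fintype Lˣ := Fintype.ofFinite _
  rw [Nat.card_eq_fintype_card] at hgd
  obtain ⟨ζ, hζ⟩ := IsCyclic.exists_generator (α := Lˣ)
  have hord : orderOf ζ = Fintype.card Lˣ := by
    rw [orderOf_eq_card_of_forall_mem_zpowers hζ, Nat.card_eq_fintype_card]
  have hN : 0 < Fintype.card Lˣ := Fintype.card_pos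
  have hu : orderOf (ζ ^ (Fintype.card Lˣ / g)) = g := by
    rw [orderOf_pow, hord, Nat.gcd_eq_right (Nat.div_dvd_of_dvd hgd),
      Nat.div_div_self hgd hN.ne']
  have hprim : IsPrimitiveRoot (ζ ^ (Fintype.card Lˣ / g)) g := by
    have := IsPrimitiveRoot.orderOf (ζ ^ (Fintype.card Lˣ / g))
    rwa [hu] at this
  haveI : NeZero g := ⟨hg.ne'⟩
  calc Nat.card {y : Lˣ // y ^ g = 1} = Nat.card (rootsOfUnity g L) :=
        Nat.card_congr (Equiv.subtypeEquivRight fun y => (mem_rootsOfUnity g y).symm)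
    _ = g := by rw [hprim.card_rootsOfUnity']

lemma aux_exists (L : Type*) [Field L] [Fintype L] {n : ℕ} (hn : 0 < n) (c : Lˣ) :
    (∃ x : Lˣ, x ^ n = c) ↔
      c ^ (Nat.card Lˣ / Nat.gcd n (Nat.card Lˣ)) = 1 := by
  haveI : Fintype Lˣ := Fintype.ofFinite _
  rw [Nat.card_eq_fintype_card]
  have hN : 0 < Fintype.card Lˣ := Fintype.card_pos
  have hg : 0 < Nat.gcd n (Fintype.card Lˣ) := Nat.gcd_pos_of_pos_left _ hn
  have hgN : Nat.gcd n (Fintype.card Lˣ) ∣ Fintype.card Lˣ := Nat.gcd_dvd_right _ _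
  have hgn : Nat.gcd n (Fintype.card Lˣ) ∣ n := Nat.gcd_dvd_left _ _
  constructor
  · rintro ⟨x, rfl⟩
    have hmul : n * (Fintype.card Lˣ / Nat.gcd n (Fintype.card Lˣ))
        = (n / Nat.gcd n (Fintype.card Lˣ)) * Fintype.card Lˣ := by
      calc n * (Fintype.card Lˣ / Nat.gcd n (Fintype.card Lˣ))
          = (n / Nat.gcd n (Fintype.card Lˣ) * Nat.gcd n (Fintype.card Lˣ))
            * (Fintype.card Lˣ / Nat.gcd n (Fintype.card Lˣ)) := by
            rw [Nat.div_mul_cancel hgn]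
        _ = n / Nat.gcd n (Fintype.card Lˣ)
            * (Nat.gcd n (Fintype.card Lˣ) * (Fintype.card Lˣ / Nat.gcd n (Fintype.card Lˣ))) := by
            ring
        _ = n / Nat.gcd n (Fintype.card Lˣ) * Fintype.card Lˣ := by
            rw [Nat.mul_div_cancel' hgN]
    rw [← pow_mul, hmul, mul_comm, pow_mul, pow_card_eq_one, one_pow]
  · intro h
    obtain ⟨ζ, hζ⟩ := IsCyclic.exists_generator (α := Lˣ)
    have hord : orderOf ζ = Fintype.card Lˣ := by
      rw [orderOf_eq_card_of_forall_mem_zpowers hζ, Nat.card_eq_fintype_card]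
    obtain ⟨t, ht⟩ := Subgroup.mem_zpowers_iff.mp (hζ c)
    have h1 : (Fintype.card Lˣ : ℤ) ∣ t * ((Fintype.card Lˣ / Nat.gcd n (Fintype.card Lˣ) : ℕ) : ℤ) := by
      have hz : ζ ^ (t * ((Fintype.card Lˣ / Nat.gcd n (Fintype.card Lˣ) : ℕ) : ℤ)) = 1 := by
        rw [zpow_mul, ht, zpow_natCast, h]
      have hd := orderOf_dvd_iff_zpow_eq_one.mpr hz
      rwa [hord] at hd
    have hfac : (Nat.gcd n (Fintype.card Lˣ) : ℤ)
        * ((Fintype.card Lˣ / Nat.gcd n (Fintype.card Lˣ) : ℕ) : ℤ) = (Fintype.card Lˣ : ℤ) := by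
      exact_mod_cast Nat.mul_div_cancel' hgN
    have hpos : ((Fintype.card Lˣ / Nat.gcd n (Fintype.card Lˣ) : ℕ) : ℤ) ≠ 0 := by
      have := Nat.div_pos (Nat.le_of_dvd hN hgN) hg
      exact_mod_cast this.ne'
    have h2 : (Nat.gcd n (Fintype.card Lˣ) : ℤ) ∣ t := by
      rw [← hfac] at h1
      exact (mul_dvd_mul_iff_right hpos).mp h1
    obtain ⟨u, hu⟩ := h2
    have hbez : (Nat.gcd n (Fintype.card Lˣ) : ℤ)
        = n * Nat.gcdA n (Fintype.card Lˣ) + (Fintype.card Lˣ) * Nat.gcdB n (Fintype.card Lˣ) :=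
      Nat.gcd_eq_gcd_ab n (Fintype.card Lˣ)
    refine ⟨ζ ^ (Nat.gcdA n (Fintype.card Lˣ) * u), ?_⟩
    have hp : (ζ ^ (Nat.gcdA n (Fintype.card Lˣ) * u)) ^ n
        = ζ ^ (Nat.gcdA n (Fintype.card Lˣ) * u * (n : ℤ)) := by
      rw [← zpow_natCast, ← zpow_mul]
    rw [hp, ← ht, zpow_eq_zpow_iff_modEq, hord]
    refine (Int.modEq_iff_dvd.mpr ⟨u * Nat.gcdB n (Fintype.card Lˣ), ?_⟩)
    linear_combination hu + u * hbez

lemma aux_count (L : Type*) [Field L] [Fintype L] {n : ℕ} (hn : 0 < n) (c : Lˣ)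
    (h : ∃ x : Lˣ, x ^ n = c) :
    Nat.card {x : Lˣ // x ^ n = c} = Nat.gcd n (Nat.card Lˣ) := by
  haveI : Fintype Lˣ := Fintype.ofFinite _
  obtain ⟨x0, hx0⟩ := h
  have e1 : {x : Lˣ // x ^ n = c} ≃ {y : Lˣ // y ^ n = 1} :=
    { toFun := fun x => ⟨x.1 * x0⁻¹, by
        rw [mul_pow, x.2, inv_pow, hx0, mul_inv_cancel]⟩
      invFun := fun y => ⟨y.1 * x0, by rw [mul_pow, y.2, one_mul, hx0]⟩
      left_inv := fun x => by ext; simp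
      right_inv := fun y => by ext; simp }
  have e2 : {y : Lˣ // y ^ n = 1} ≃ {y : Lˣ // y ^ Nat.gcd n (Fintype.card Lˣ) = 1} :=
    Equiv.subtypeEquivRight fun y => by rw [pow_gcd_eq_one, and_iff_left pow_card_eq_one]
  rw [Nat.card_congr e1, Nat.card_congr e2, Nat.card_eq_fintype_card (α := Lˣ)]
  exact aux_card_roots L (Nat.gcd_pos_of_pos_left _ hn)
    (by rw [Nat.card_eq_fintype_card]; exact Nat.gcd_dvd_right _ _)




/-- Kernel dimension of `φ(x) = λx + μx^{q^k}` on `F_{q^m}` (`μ ≠ 0`, `ρ = λ/μ`,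
`d = gcd(k,m)`): it is `d` if `(-ρ)^{(q^m-1)/(q^d-1)} = 1`, and `0` otherwise. -/
theorem stmt6 (K L : Type*) [Field K] [Fintype K] [Field L] [Fintype L] [Algebra K L]
    (hm : 2 ≤ Module.finrank K L)
    (k : ℕ) (hk1 : 1 ≤ k) (hk2 : k ≤ Module.finrank K L - 1)
    (lam mu : L) (hmu : mu ≠ 0)
    (φ : L →ₗ[K] L) (hφ : ∀ x, φ x = lam * x + mu * x ^ Fintype.card K ^ k) :
    ((-(lam / mu)) ^ ((Fintype.card K ^ Module.finrank K L - 1) /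
        (Fintype.card K ^ Nat.gcd k (Module.finrank K L) - 1)) = 1 →
      Module.finrank K ↥(LinearMap.ker φ) = Nat.gcd k (Module.finrank K L)) ∧
    ((-(lam / mu)) ^ ((Fintype.card K ^ Module.finrank K L - 1) /
        (Fintype.card K ^ Nat.gcd k (Module.finrank K L) - 1)) ≠ 1 →
      Module.finrank K ↥(LinearMap.ker φ) = 0) := by
  classical
  set q := Fintype.card K with hq_def
  set m := Module.finrank K L with hm_def
  set d := Nat.gcd k m with hd_def
  set c : L := -(lam / mu) with hc_def
  set e := (q ^ m - 1) / (q ^ d - 1) with he_def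
  have hq2 : 2 ≤ q := Fintype.one_lt_card
  have hm0 : 0 < m := by omega
  have hd1 : 1 ≤ d := Nat.gcd_pos_of_pos_left m hk1
  have hdm : d ∣ m := Nat.gcd_dvd_right k m
  have hdlem : d ≤ m := Nat.le_of_dvd hm0 hdm
  have hqk2 : 2 ≤ q ^ k := by
    calc 2 = 2 ^ 1 := rfl
    _ ≤ q ^ k := Nat.pow_le_pow_left hq2 1 |>.trans (Nat.pow_le_pow_right (by omega) hk1)
  have hqd2 : 2 ≤ q ^ d := by
    calc 2 = 2 ^ 1 := rfl
    _ ≤ q ^ d := Nat.pow_le_pow_left hq2 1 |>.trans (Nat.pow_le_pow_right (by omega) hd1)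
  have hqm_le : q ^ d ≤ q ^ m := Nat.pow_le_pow_right (by omega) hdlem
  have he_pos : 0 < e := Nat.div_pos (by omega) (by omega)
  have cardL : Fintype.card L = q ^ m := Module.card_eq_pow_finrank
  have cardLx : Nat.card Lˣ = q ^ m - 1 := by
    rw [Nat.card_eq_fintype_card, Fintype.card_units, cardL]
  -- kernel membership
  have hker : ∀ x : L, x ∈ LinearMap.ker φ ↔ x ^ q ^ k = c * x := by
    intro x
    rw [LinearMap.mem_ker, hφ]
    have hmc : mu * c = -lam := by
      rw [hc_def]; field_simp
    constructor
    · intro h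
      have h2 : mu * (x ^ q ^ k - c * x) = 0 := by
        rw [mul_sub, ← mul_assoc, hmc]; linear_combination h
      rcases mul_eq_zero.mp h2 with h3 | h3
      · exact absurd h3 hmu
      · exact sub_eq_zero.mp h3
    · intro h
      rw [h, ← mul_assoc, hmc]; ring
  have hqk_ne : q ^ k ≠ 0 := by omega
  by_cases hlam : lam = 0
  · -- c = 0, condition fails, kernel trivial
    have hc0 : c = 0 := by rw [hc_def, hlam]; simp
    have hcond : c ^ e ≠ 1 := by
      rw [hc0, zero_pow he_pos.ne']
      exact zero_ne_one
    have hkerbot : LinearMap.ker φ = ⊥ := by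
      ext x
      rw [hker x, hc0, Submodule.mem_bot]
      constructor
      · intro h
        have : x ^ q ^ k = 0 := by rw [h]; ring
        exact pow_eq_zero_iff hqk_ne |>.mp this
      · rintro rfl; rw [zero_pow hqk_ne]; ring
    refine ⟨fun h1 => absurd h1 hcond, fun _ => ?_⟩
    rw [hkerbot, finrank_bot]
  · -- main case
    have hc_ne : c ≠ 0 := by
      rw [hc_def]
      simp [div_eq_zero_iff, hlam, hmu]
    set cu : Lˣ := Units.mk0 c hc_ne with hcu_def
    set n := q ^ k - 1 with hn_def
    have hn_pos : 0 < n := by omega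
    have hgcd : Nat.gcd n (Nat.card Lˣ) = q ^ d - 1 := by
      rw [cardLx, hn_def, aux_gcd q (by omega) k m, hd_def]
    have hE : Nat.card Lˣ / Nat.gcd n (Nat.card Lˣ) = e := by
      rw [hgcd, cardLx, he_def]
    have hcond_iff : (∃ x : Lˣ, x ^ n = cu) ↔ c ^ e = 1 := by
      rw [aux_exists L hn_pos cu, hE]
      constructor
      · intro h
        have := congrArg Units.val h
        simpa [hcu_def] using this
      · intro h
        ext
        simpa [hcu_def] using h
    -- kernel set description
    have hiff : ∀ x : L, (x ^ q ^ k = c * x) ↔ (x = 0 ∨ x ^ n = c) := by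
      intro x
      by_cases hx : x = 0
      · subst hx
        simp [zero_pow (show q ^ k ≠ 0 by positivity)]
      · have hpow : x ^ q ^ k = x ^ n * x := by
          rw [← pow_succ, hn_def]
          congr 1
          omega
        rw [hpow]
        constructor
        · intro h
          exact Or.inr (mul_right_cancel₀ hx h)
        · rintro (h | h)
          · exact absurd h hx
          · rw [h]
    have hker_set : (LinearMap.ker φ : Set L) = {0} ∪ {x : L | x ^ n = c} := by
      ext x
      simp only [SetLike.mem_coe, hker x, hiff x, Set.mem_union, Set.mem_singleton_iff,
        Set.mem_setOf_eq]
    have h0nS : (0 : L) ∉ {x : L | x ^ n = c} := by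
      intro h
      simp only [Set.mem_setOf_eq, zero_pow hn_pos.ne'] at h
      exact hc_ne h.symm
    -- equiv with units
    have e2 : {x : Lˣ // x ^ n = cu} ≃ {x : L // x ^ n = c} :=
      { toFun := fun u => ⟨(u.1 : L), by
          have := congrArg Units.val u.2
          simpa [hcu_def] using this⟩
        invFun := fun x => ⟨Units.mk0 x.1 (by
            intro h0
            apply hc_ne
            rw [← x.2, h0, zero_pow hn_pos.ne']), by
          ext
          simpa [hcu_def] using x.2⟩
        left_inv := fun u => by ext; simp
        right_inv := fun x => by ext; simp }
    have hcard_ker : Nat.card ↥(LinearMap.ker φ) = 1 + Nat.card {x : Lˣ // x ^ n = cu} := by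
      have h1 : Nat.card ↥(LinearMap.ker φ) = ((LinearMap.ker φ : Set L)).ncard := by
        rw [← Nat.card_coe_set_eq]; rfl
      rw [h1, hker_set, Set.ncard_union_eq (Set.disjoint_singleton_left.mpr h0nS)
        (Set.finite_singleton _) (Set.toFinite _), Set.ncard_singleton]
      congr 1
      rw [← Nat.card_coe_set_eq]
      exact (Nat.card_congr e2).symm
    have hfin : Nat.card ↥(LinearMap.ker φ) = q ^ Module.finrank K ↥(LinearMap.ker φ) := by
      rw [Nat.card_eq_fintype_card]
      exact Module.card_eq_pow_finrank
    constructor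
    · intro h1
      have hex : ∃ x : Lˣ, x ^ n = cu := hcond_iff.mpr h1
      have : Nat.card ↥(LinearMap.ker φ) = q ^ d := by
        rw [hcard_ker, aux_count L hn_pos cu hex, hgcd]
        omega
      rw [hfin] at this
      exact Nat.pow_right_injective hq2 this
    · intro h1
      have hex : ¬ ∃ x : Lˣ, x ^ n = cu := fun h => h1 (hcond_iff.mp h)
      have hempty : IsEmpty {x : Lˣ // x ^ n = cu} := by
        constructor
        rintro ⟨x, hx⟩
        exact hex ⟨x, hx⟩
      have : Nat.card ↥(LinearMap.ker φ) = q ^ 0 := by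
        rw [hcard_ker, Nat.card_of_isEmpty, pow_zero]
        omega
      rw [hfin] at this
      exact Nat.pow_right_injective hq2 this
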